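/- Fix α > 0 and γ ∈ (0,1), and consider the RMSProp-type recursion β_{t+1} = β_t − (α/√(1 − γ^t))·sgn(β_t) for t ≥ 1, with sgn(0) = 0. Then for every t ≥ 1 with γ^t ≤ 1/2, the update differs from the vanilla NDGM update with penalty 1 by at most α·γ^t: |β_{t+1} − (β_t − α·sgn(β_t))| ≤ α·γ^t. In particular the RMSProp sequence eventually behaves like a vanilla NDGM sequence with LASSO penalty 1 up to an error of order γ^t, irrespective of the penalty λ used in the original LASSO problem. -/

import Mathlib

/-- The RMSProp-type recursion `β_{t+1} = β_t - (α/√(1-γ^t))·sgn(β_t)` eventually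
behaves like vanilla NDGM with penalty 1: for `t ≥ 1` with `γ^t ≤ 1/2`,
`|β_{t+1} - (β_t - α·sgn(β_t))| ≤ α·γ^t`. -/
theorem stmt_10 (α γ : ℝ) (hα : 0 < α) (hγ0 : 0 < γ) (hγ1 : γ < 1)
    (β : ℕ → ℝ)
    (hrec : ∀ t, 1 ≤ t → β (t + 1) =
      β t - (α / Real.sqrt (1 - γ ^ t)) * Real.sign (β t)) :
    ∀ t : ℕ, 1 ≤ t → γ ^ t ≤ 1 / 2 →
      |β (t + 1) - (β t - α * Real.sign (β t))| ≤ α * γ ^ t := by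
  intro t ht hx1
  set x := γ ^ t with hxdef
  have hx0 : 0 < x := pow_pos hγ0 t
  set s := Real.sqrt (1 - x) with hsdef
  have hs0 : 0 < s := Real.sqrt_pos.mpr (by linarith)
  have hs2 : s ^ 2 = 1 - x := Real.sq_sqrt (by linarith)
  have hs1 : s ≤ 1 := by nlinarith
  rw [hrec t ht]
  have heq : β t - α / s * Real.sign (β t) - (β t - α * Real.sign (β t))
      = (α - α / s) * Real.sign (β t) := by ring
  rw [heq, abs_mul]
  have hsgn : |Real.sign (β t)| ≤ 1 := by
    rcases Real.sign_apply_eq (β t) with h | h | h <;> rw [h] <;> norm_num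
  have hle : α ≤ α / s := by
    rw [le_div_iff₀ hs0]; nlinarith
  have hkey : |α - α / s| ≤ α * x := by
    rw [abs_sub_comm, abs_of_nonneg (by linarith)]
    have h1 : 1 ≤ (1 + x) * s := by nlinarith
    rw [div_sub' (ne_of_gt hs0), div_le_iff₀ hs0]
    nlinarith
  calc |α - α / s| * |Real.sign (β t)| ≤ (α * x) * 1 :=
        mul_le_mul hkey hsgn (abs_nonneg _) (by positivity)
    _ = α * x := by ring
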